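/- Let w : (0,R) × (0,T) → ℝ be C² in r and C¹ in t, satisfying w_t ≥ 0, w_r ≤ 0, w ≥ μ̃ ≥ 0, and the PDE w_t = w_{rr} + ((n+1)/r) w_r + n(w + b r w_r)(w − μ̃) with b > 0, n ≥ 1, μ ≥ 0, μ̃ = μ/n. Then the quantity E(r,t) = (1/2) w_r² + (n/3) w³ is nonincreasing in r for each fixed t, and consequently |w_r(r,t)| ≤ C₁ w^{3/2}(0,t) with C₁ = √(2n/3), assuming w(·,t) extends continuously to r = 0 with w_r(0,t)=0. -/

import Mathlib

open Set

theorem stmt13 (n : ℕ) (hn : 1 ≤ n) (R T b mu : ℝ) (hR : 0 < R) (hT : 0 < T)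
    (hb : 0 < b) (hmu : 0 ≤ mu)
    (w wr wrr wt : ℝ → ℝ → ℝ)
    (hwr : ∀ r ∈ Ioo (0:ℝ) R, ∀ t ∈ Ioo (0:ℝ) T, HasDerivAt (fun ρ => w ρ t) (wr r t) r)
    (hwrr : ∀ r ∈ Ioo (0:ℝ) R, ∀ t ∈ Ioo (0:ℝ) T, HasDerivAt (fun ρ => wr ρ t) (wrr r t) r)
    (hwt : ∀ r ∈ Ioo (0:ℝ) R, ∀ t ∈ Ioo (0:ℝ) T, HasDerivAt (fun τ => w r τ) (wt r t) t)
    (hpde : ∀ r ∈ Ioo (0:ℝ) R, ∀ t ∈ Ioo (0:ℝ) T,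
      wt r t = wrr r t + (((n : ℝ) + 1) / r) * wr r t
        + n * (w r t + b * r * wr r t) * (w r t - mu / n))
    (hwt0 : ∀ r ∈ Ioo (0:ℝ) R, ∀ t ∈ Ioo (0:ℝ) T, 0 ≤ wt r t)
    (hwr0 : ∀ r ∈ Ioo (0:ℝ) R, ∀ t ∈ Ioo (0:ℝ) T, wr r t ≤ 0)
    (hwlow : ∀ r ∈ Ioo (0:ℝ) R, ∀ t ∈ Ioo (0:ℝ) T, mu / n ≤ w r t)
    (hwcont : ∀ t ∈ Ioo (0:ℝ) T,
      Filter.Tendsto (fun ρ => w ρ t) (nhdsWithin 0 (Ioi 0)) (nhds (w 0 t)))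
    (hwrcont : ∀ t ∈ Ioo (0:ℝ) T,
      Filter.Tendsto (fun ρ => wr ρ t) (nhdsWithin 0 (Ioi 0)) (nhds (wr 0 t)))
    (hwr00 : ∀ t ∈ Ioo (0:ℝ) T, wr 0 t = 0) :
    (∀ t ∈ Ioo (0:ℝ) T, ∀ r₁ ∈ Ioo (0:ℝ) R, ∀ r₂ ∈ Ioo (0:ℝ) R, r₁ ≤ r₂ →
        (1 / 2) * (wr r₂ t) ^ 2 + ((n : ℝ) / 3) * (w r₂ t) ^ 3
          ≤ (1 / 2) * (wr r₁ t) ^ 2 + ((n : ℝ) / 3) * (w r₁ t) ^ 3) ∧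
    (∀ t ∈ Ioo (0:ℝ) T, ∀ r ∈ Ioo (0:ℝ) R,
        |wr r t| ≤ Real.sqrt (2 * n / 3) * (w 0 t) ^ ((3:ℝ) / 2)) := by
  -- For each t, the energy E is antitone on Ioo 0 R
  have hanti : ∀ t ∈ Ioo (0:ℝ) T, AntitoneOn
      (fun ρ => (1 / 2) * (wr ρ t) ^ 2 + ((n : ℝ) / 3) * (w ρ t) ^ 3) (Ioo 0 R) := by
    intro t ht
    have hE : ∀ r ∈ Ioo (0:ℝ) R, HasDerivAt
        (fun ρ => (1 / 2) * (wr ρ t) ^ 2 + ((n : ℝ) / 3) * (w ρ t) ^ 3)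
        (wr r t * (wrr r t + n * (w r t) ^ 2)) r := by
      intro r hr
      have h1 := ((hwrr r hr t ht).pow 2).const_mul (1/2 : ℝ)
      have h2 := ((hwr r hr t ht).pow 3).const_mul ((n : ℝ)/3)
      have := h1.add h2
      exact this.congr_deriv (by push_cast; ring)
    have hEnonpos : ∀ r ∈ Ioo (0:ℝ) R, wr r t * (wrr r t + n * (w r t) ^ 2) ≤ 0 := by
      intro r hr
      have h0 : (0:ℝ) < n := by exact_mod_cast hn
      have key : wrr r t + (n:ℝ) * (w r t) ^ 2
          = wt r t - (((n : ℝ) + 1) / r) * wr r t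
            - (n:ℝ) * (b * r * wr r t) * (w r t - mu / n) + mu * w r t := by
        have := hpde r hr t ht
        have hw : (n:ℝ) * (w r t) ^ 2 - (n:ℝ) * w r t * (w r t - mu / n) = mu * w r t := by
          field_simp
          ring
        nlinarith [this]
      have hwnn : 0 ≤ w r t := le_trans (div_nonneg hmu (le_of_lt h0)) (hwlow r hr t ht)
      have hwm : 0 ≤ w r t - mu / n := sub_nonneg.2 (hwlow r hr t ht)
      have hwr' : wr r t ≤ 0 := hwr0 r hr t ht
      have hkey : 0 ≤ wrr r t + (n:ℝ) * (w r t) ^ 2 := by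
        rw [key]
        have h1 : 0 ≤ wt r t := hwt0 r hr t ht
        have h2 : (((n : ℝ) + 1) / r) * wr r t ≤ 0 :=
          mul_nonpos_of_nonneg_of_nonpos (div_nonneg (by positivity) hr.1.le) hwr'
        have h3 : (n:ℝ) * (b * r * wr r t) * (w r t - mu / n) ≤ 0 := by
          apply mul_nonpos_of_nonpos_of_nonneg _ hwm
          apply mul_nonpos_of_nonneg_of_nonpos h0.le
          exact mul_nonpos_of_nonneg_of_nonpos (mul_nonneg hb.le hr.1.le) hwr'
        nlinarith [mul_nonneg hmu hwnn]
      exact mul_nonpos_of_nonpos_of_nonneg hwr' hkey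
    apply antitoneOn_of_hasDerivWithinAt_nonpos (convex_Ioo 0 R)
        (f' := fun r => wr r t * (wrr r t + n * (w r t) ^ 2))
    · intro r hr
      exact (hE r hr).continuousAt.continuousWithinAt
    · intro r hr
      rw [interior_Ioo] at hr
      exact (hE r hr).hasDerivWithinAt
    · intro r hr
      rw [interior_Ioo] at hr
      exact hEnonpos r hr
  refine ⟨fun t ht r₁ hr₁ r₂ hr₂ h12 => hanti t ht hr₁ hr₂ h12, ?_⟩
  intro t ht r hr
  have h0 : (0:ℝ) < n := by exact_mod_cast hn
  have hw0 : 0 ≤ w 0 t := by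
    refine le_of_tendsto_of_tendsto tendsto_const_nhds (hwcont t ht) ?_
    filter_upwards [Ioo_mem_nhdsGT_of_mem ⟨le_refl (0:ℝ), hR⟩] with ρ hρ
    exact le_trans (div_nonneg hmu h0.le) (hwlow ρ hρ t ht)
  set E : ℝ → ℝ := fun ρ => (1 / 2) * (wr ρ t) ^ 2 + ((n : ℝ) / 3) * (w ρ t) ^ 3 with hEdef
  have hlim : Filter.Tendsto E (nhdsWithin 0 (Ioi 0))
      (nhds (((n : ℝ) / 3) * (w 0 t) ^ 3)) := by
    have : Filter.Tendsto E (nhdsWithin 0 (Ioi 0))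
        (nhds ((1 / 2) * (wr 0 t) ^ 2 + ((n : ℝ) / 3) * (w 0 t) ^ 3)) := by
      exact (((hwrcont t ht).pow 2).const_mul _).add (((hwcont t ht).pow 3).const_mul _)
    simpa [hwr00 t ht] using this
  have hEle : E r ≤ ((n : ℝ) / 3) * (w 0 t) ^ 3 := by
    refine ge_of_tendsto hlim ?_
    filter_upwards [Ioo_mem_nhdsGT_of_mem ⟨le_refl (0:ℝ), hr.1⟩] with ρ hρ
    exact hanti t ht ⟨hρ.1, hρ.2.trans hr.2⟩ hr hρ.2.le
  have hwnn : 0 ≤ w r t := le_trans (div_nonneg hmu h0.le) (hwlow r hr t ht)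
  have hsq : (wr r t) ^ 2 ≤ (2 * n / 3) * (w 0 t) ^ 3 := by
    have : ((n : ℝ) / 3) * (w r t) ^ 3 ≥ 0 := by positivity
    simp only [hEdef] at hEle
    nlinarith
  have habs : |wr r t| = Real.sqrt ((wr r t) ^ 2) := (Real.sqrt_sq_eq_abs _).symm
  rw [habs]
  have h32 : (w 0 t) ^ ((3:ℝ) / 2) = Real.sqrt ((w 0 t) ^ 3) := by
    rw [Real.sqrt_eq_rpow, ← Real.rpow_natCast (w 0 t) 3, ← Real.rpow_mul hw0]
    norm_num
  rw [h32, ← Real.sqrt_mul (by positivity : (0:ℝ) ≤ 2 * n / 3)]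
  exact Real.sqrt_le_sqrt hsq
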